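/- If A is an invertible square matrix over a field F, then all leading principal minors of A are nonzero if and only if A admits an LU decomposition, i.e., A = LU with L lower triangular and U upper triangular (both invertible). -/

import Mathlib

open Matrix Finset

section helpers

variable {F : Type*} [Field F]

/-- determinant of a lower triangular matrix -/
lemma det_lower {n : ℕ} (L : Matrix (Fin n) (Fin n) F)
    (hL : ∀ i j, i < j → L i j = 0) : L.det = ∏ i, L i i :=
  Matrix.det_of_lowerTriangular L (fun i j h => hL i j (by exact h))

lemma det_upper {n : ℕ} (U : Matrix (Fin n) (Fin n) F)
    (hU : ∀ i j, j < i → U i j = 0) : U.det = ∏ i, U i i :=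
  Matrix.det_of_upperTriangular (fun i j h => hU i j (by exact h))

/-- submatrix of product of lower*upper -/
lemma submatrix_mul_castLE {n k : ℕ} (hk : k ≤ n) (L U : Matrix (Fin n) (Fin n) F)
    (hL : ∀ i j, i < j → L i j = 0) :
    (L * U).submatrix (Fin.castLE hk) (Fin.castLE hk)
      = L.submatrix (Fin.castLE hk) (Fin.castLE hk)
        * U.submatrix (Fin.castLE hk) (Fin.castLE hk) := by
  ext i j
  simp only [Matrix.submatrix_apply, Matrix.mul_apply]
  set g : ℕ → F := fun m =>
    if h : m < n then L (Fin.castLE hk i) ⟨m, h⟩ * U ⟨m, h⟩ (Fin.castLE hk j) else 0 with hg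
  have h1 : ∑ m : Fin n, L (Fin.castLE hk i) m * U m (Fin.castLE hk j)
      = ∑ m ∈ Finset.range n, g m := by
    rw [← Fin.sum_univ_eq_sum_range]
    apply Finset.sum_congr rfl
    intro m _
    simp [hg, m.isLt]
  have h2 : ∑ m : Fin k, L (Fin.castLE hk i) (Fin.castLE hk m) * U (Fin.castLE hk m) (Fin.castLE hk j)
      = ∑ m ∈ Finset.range k, g m := by
    rw [← Fin.sum_univ_eq_sum_range]
    apply Finset.sum_congr rfl
    intro m _
    have hm : (m : ℕ) < n := lt_of_lt_of_le m.isLt hk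
    simp only [hg, hm, dif_pos]
    rfl
  rw [h1, h2]
  symm
  apply Finset.sum_subset (Finset.range_subset_range.2 hk)
  intro m hmn hmk
  simp only [Finset.mem_range, not_lt] at hmn hmk
  simp only [hg, hmn, dif_pos]
  have : L (Fin.castLE hk i) ⟨m, hmn⟩ = 0 := by
    apply hL
    simp only [Fin.lt_def, Fin.coe_castLE]
    exact lt_of_lt_of_le i.isLt hmk
  rw [this, zero_mul]

end helpers

lemma lu_of_minors {F : Type*} [Field F] : ∀ (n : ℕ) (A : Matrix (Fin n) (Fin n) F),
    (∀ (k : ℕ) (hk : k ≤ n), (A.submatrix (Fin.castLE hk) (Fin.castLE hk)).det ≠ 0) →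
    ∃ L U : Matrix (Fin n) (Fin n) F,
      (∀ i j, i < j → L i j = 0) ∧ (∀ i j, j < i → U i j = 0) ∧
        IsUnit L.det ∧ IsUnit U.det ∧ A = L * U := by
  intro n
  induction n with
  | zero =>
    intro A _
    refine ⟨1, 1, ?_, ?_, ?_, ?_, ?_⟩ <;> first
      | exact fun i j _ => i.elim0
      | simp
    · apply Subsingleton.elim
  | succ n ih =>
    intro A hmin
    -- the top-left n×n block
    set A' : Matrix (Fin n) (Fin n) F :=
      fun i j => A i.castSucc j.castSucc with hA'
    have hsub : ∀ (k : ℕ) (hk : k ≤ n),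
        A'.submatrix (Fin.castLE hk) (Fin.castLE hk)
          = A.submatrix (Fin.castLE (hk.trans n.le_succ)) (Fin.castLE (hk.trans n.le_succ)) := by
      intro k hk
      ext i j
      simp [hA', Matrix.submatrix_apply, Fin.ext_iff]
      rfl
    have hmin' : ∀ (k : ℕ) (hk : k ≤ n),
        (A'.submatrix (Fin.castLE hk) (Fin.castLE hk)).det ≠ 0 := by
      intro k hk
      rw [hsub k hk]
      exact hmin k (hk.trans n.le_succ)
    obtain ⟨L', U', hL', hU', hLd, hUd, hLU⟩ := ih A' hmin'
    have hdetA' : A'.det ≠ 0 := by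
      have := hmin' n le_rfl
      have he : (Fin.castLE (le_refl n)) = (id : Fin n → Fin n) := by
        funext i; exact Fin.ext rfl
      rwa [he, Matrix.submatrix_id_id] at this
    have hL'inv : IsUnit L'.det := hLd
    have hU'inv : IsUnit U'.det := hUd
    -- data
    set b : Fin n → F := fun i => A i.castSucc (Fin.last n) with hb
    set c : Fin n → F := fun j => A (Fin.last n) j.castSucc with hc
    set x : Fin n → F := Matrix.vecMul c U'⁻¹ with hx
    set y : Fin n → F := Matrix.mulVec L'⁻¹ b with hy
    set s : F := A (Fin.last n) (Fin.last n) - x ⬝ᵥ y with hs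
    set L : Matrix (Fin (n+1)) (Fin (n+1)) F := fun i j =>
      if hi : (i : ℕ) < n then (if hj : (j : ℕ) < n then L' ⟨i, hi⟩ ⟨j, hj⟩ else 0)
      else (if hj : (j : ℕ) < n then x ⟨j, hj⟩ else 1) with hLdef
    set U : Matrix (Fin (n+1)) (Fin (n+1)) F := fun i j =>
      if hi : (i : ℕ) < n then (if hj : (j : ℕ) < n then U' ⟨i, hi⟩ ⟨j, hj⟩ else y ⟨i, hi⟩)
      else (if hj : (j : ℕ) < n then 0 else s) with hUdef
    have hLlow : ∀ i j, i < j → L i j = 0 := by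
      intro i j hij
      rcases lt_or_ge (i : ℕ) n with hi | hi
      · rcases lt_or_ge (j : ℕ) n with hj | hj
        · simp only [hLdef, hi, hj, dif_pos]
          exact hL' _ _ hij
        · simp [hLdef, hi, not_lt.2 hj]
      · exfalso
        have h1 : (j : ℕ) < n + 1 := j.isLt
        have h2 : (i : ℕ) < (j : ℕ) := hij
        omega
    have hUup : ∀ i j, j < i → U i j = 0 := by
      intro i j hij
      rcases lt_or_ge (j : ℕ) n with hj | hj
      · rcases lt_or_ge (i : ℕ) n with hi | hi
        · simp only [hUdef, hi, hj, dif_pos]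
          exact hU' _ _ hij
        · simp [hUdef, not_lt.2 hi, hj]
      · exfalso
        have h1 : (i : ℕ) < n + 1 := i.isLt
        have h2 : (j : ℕ) < (i : ℕ) := hij
        omega
    -- accessor lemmas
    have hcs : ∀ p : Fin n, ((p.castSucc : Fin (n+1)) : ℕ) < n := fun p => p.isLt
    have hlast : ¬ ((Fin.last n : Fin (n+1)) : ℕ) < n := by simp
    have Lcc : ∀ p q : Fin n, L p.castSucc q.castSucc = L' p q := by
      intro p q
      simp only [hLdef, hcs p, hcs q, dif_pos]
      congr 1 <;> exact Fin.ext rfl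
    have Lcl : ∀ p : Fin n, L p.castSucc (Fin.last n) = 0 := by
      intro p
      simp only [hLdef, hcs p, dif_pos, hlast, dif_neg, not_false_iff]
    have Llc : ∀ q : Fin n, L (Fin.last n) q.castSucc = x q := by
      intro q
      simp only [hLdef, hlast, dif_neg, not_false_iff, hcs q, dif_pos]
      congr 1
    have Lll : L (Fin.last n) (Fin.last n) = 1 := by
      simp only [hLdef, hlast, dif_neg, not_false_iff]
    have Ucc : ∀ p q : Fin n, U p.castSucc q.castSucc = U' p q := by
      intro p q
      simp only [hUdef, hcs p, hcs q, dif_pos]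
      congr 1 <;> exact Fin.ext rfl
    have Ucl : ∀ p : Fin n, U p.castSucc (Fin.last n) = y p := by
      intro p
      simp only [hUdef, hcs p, dif_pos, hlast, dif_neg, not_false_iff]
      congr 1
    have Ulc : ∀ q : Fin n, U (Fin.last n) q.castSucc = 0 := by
      intro q
      simp only [hUdef, hlast, dif_neg, not_false_iff, hcs q, dif_pos]
    have Ull : U (Fin.last n) (Fin.last n) = s := by
      simp only [hUdef, hlast, dif_neg, not_false_iff]
    -- the product
    have hmul : A = L * U := by
      ext i j
      rw [Matrix.mul_apply, Fin.sum_univ_castSucc]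
      induction i using Fin.lastCases with
      | last =>
        induction j using Fin.lastCases with
        | last =>
          simp only [Llc, Ucl, Lll, Ull, one_mul]
          have hd : x ⬝ᵥ y = ∑ m : Fin n, x m * y m := rfl
          rw [hs, hd]
          ring
        | cast q =>
          simp only [Llc, Lll, Ulc, Ucc, one_mul, mul_zero, add_zero]
          have : ∑ m : Fin n, x m * U' m q = (x ᵥ* U') q := rfl
          rw [this, hx, Matrix.vecMul_vecMul, Matrix.nonsing_inv_mul U' hUd, Matrix.vecMul_one]
      | cast p =>
        induction j using Fin.lastCases with
        | last =>
          simp only [Lcc, Lcl, Ucl, zero_mul, add_zero]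
          have : ∑ m : Fin n, L' p m * y m = (L' *ᵥ y) p := rfl
          rw [this, hy, Matrix.mulVec_mulVec, Matrix.mul_nonsing_inv L' hLd, Matrix.one_mulVec]
        | cast q =>
          simp only [Lcc, Lcl, Ucc, zero_mul, add_zero]
          have : ∑ m : Fin n, L' p m * U' m q = (L' * U') p q := (Matrix.mul_apply).symm
          rw [this, ← hLU]
    -- determinants
    have detL : L.det = L'.det := by
      rw [det_lower L hLlow, det_lower L' hL', Fin.prod_univ_castSucc]
      simp only [Lcc, Lll, mul_one]
    have detU : U.det = U'.det * s := by
      rw [det_upper U hUup, det_upper U' hU', Fin.prod_univ_castSucc]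
      simp only [Ucc, Ull]
    have hdetA : A.det ≠ 0 := by
      have := hmin (n+1) le_rfl
      have he : (Fin.castLE (le_refl (n+1))) = (id : Fin (n+1) → Fin (n+1)) := by
        funext i; exact Fin.ext rfl
      rwa [he, Matrix.submatrix_id_id] at this
    have hLu : IsUnit L.det := by rw [detL]; exact hLd
    have hUu : IsUnit U.det := by
      have : L.det * U.det ≠ 0 := by
        rw [← Matrix.det_mul, ← hmul]; exact hdetA
      exact isUnit_iff_ne_zero.2 (right_ne_zero_of_mul this)
    exact ⟨L, U, hLlow, hUup, hLu, hUu, hmul⟩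

lemma minors_of_lu {n : ℕ} {F : Type*} [Field F] (L U : Matrix (Fin n) (Fin n) F)
    (hL : ∀ i j, i < j → L i j = 0) (hU : ∀ i j, j < i → U i j = 0)
    (hLd : IsUnit L.det) (hUd : IsUnit U.det) :
    ∀ (k : ℕ) (hk : k ≤ n), ((L * U).submatrix (Fin.castLE hk) (Fin.castLE hk)).det ≠ 0 := by
  intro k hk
  rw [submatrix_mul_castLE hk L U hL, Matrix.det_mul]
  have hLdiag : ∀ i : Fin n, L i i ≠ 0 := by
    intro i
    have h := hLd.ne_zero
    rw [det_lower L hL] at h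
    exact Finset.prod_ne_zero_iff.1 h i (Finset.mem_univ i)
  have hUdiag : ∀ i : Fin n, U i i ≠ 0 := by
    intro i
    have h := hUd.ne_zero
    rw [det_upper U hU] at h
    exact Finset.prod_ne_zero_iff.1 h i (Finset.mem_univ i)
  have hLk : (L.submatrix (Fin.castLE hk) (Fin.castLE hk)).det ≠ 0 := by
    rw [det_lower (L.submatrix (Fin.castLE hk) (Fin.castLE hk))
      (fun i j hij => hL _ _ (by rw [Fin.lt_def, Fin.coe_castLE, Fin.coe_castLE]; exact hij))]
    exact Finset.prod_ne_zero_iff.2 fun i _ => hLdiag _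
  have hUk : (U.submatrix (Fin.castLE hk) (Fin.castLE hk)).det ≠ 0 := by
    rw [det_upper (U.submatrix (Fin.castLE hk) (Fin.castLE hk))
      (fun i j hij => hU _ _ (by rw [Fin.lt_def, Fin.coe_castLE, Fin.coe_castLE]; exact hij))]
    exact Finset.prod_ne_zero_iff.2 fun i _ => hUdiag _
  exact mul_ne_zero hLk hUk

/-- For an invertible matrix `A` over a field, all leading principal minors of `A`
are nonzero iff `A` admits an LU decomposition `A = L * U` with `L` lower
triangular, `U` upper triangular, both invertible. -/
theorem leading_minors_ne_zero_iff_lu {n : ℕ} {F : Type*} [Field F]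
    (A : Matrix (Fin n) (Fin n) F) (hA : IsUnit A.det) :
    (∀ (k : ℕ) (hk : k ≤ n), (A.submatrix (Fin.castLE hk) (Fin.castLE hk)).det ≠ 0) ↔
      ∃ L U : Matrix (Fin n) (Fin n) F,
        (∀ i j, i < j → L i j = 0) ∧ (∀ i j, j < i → U i j = 0) ∧
          IsUnit L.det ∧ IsUnit U.det ∧ A = L * U := by
  constructor
  · exact lu_of_minors n A
  · rintro ⟨L, U, hL, hU, hLd, hUd, rfl⟩
    exact minors_of_lu L U hL hU hLd hUd
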